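/- Let Φ be a monotone function on finite sets of primers defined by Φ(P) = Σ_{i=1}^n min(L, |f̄^i(P)| + |r̄^i(P)|), where f̄^i(P) and r̄^i(P) are the longest prefixes of fixed strings f^i and r^i covered by some primer in P (lengths given by the maximum hybridization position of any primer of P, or 0 if none). Then Φ is subadditive in the following sense: for all finite sets A, B, Φ(A ∪ B) ≤ Φ(A) + Σ_{p∈B} (Φ(A ∪ {p}) − Φ(A)). -/
import Mathlib


open Finset

/-- The potential of a set `P` of primers: `Φ(P) = Σ_i min(L, |f̄ⁱ(P)| + |r̄ⁱ(P)|)`,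
where the length of the longest covered prefix of the `i`-th forward (resp. reverse)
string is the maximum hybridization position of a primer of `P` on it (0 if `P = ∅`). -/
def primerPotential {α : Type*} [DecidableEq α] (n L : ℕ)
    (posf posr : α → Fin n → ℕ) (P : Finset α) : ℕ :=
  ∑ i : Fin n, min L (P.sup (fun p => posf p i) + P.sup (fun p => posr p i))

private lemma num_key (L a r a' r' x y : ℕ) (ha : a ≤ a') (hr : r ≤ r') :
    min L (max x a' + max y r') + min L (a + r) ≤
      min L (max x a + max y r) + min L (a' + r') := by
  omega

private lemma submod {α : Type*} [DecidableEq α] (n L : ℕ)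
    (posf posr : α → Fin n → ℕ) {A A' : Finset α} (h : A ⊆ A') (p : α) :
    primerPotential n L posf posr (insert p A') + primerPotential n L posf posr A ≤
      primerPotential n L posf posr (insert p A) + primerPotential n L posf posr A' := by
  unfold primerPotential
  rw [← Finset.sum_add_distrib, ← Finset.sum_add_distrib]
  apply Finset.sum_le_sum
  intro i _
  simp only [Finset.sup_insert]
  exact num_key L _ _ _ _ _ _ (Finset.sup_mono h) (Finset.sup_mono h)

/-- Subadditivity of the potential `Φ`:
`Φ(A ∪ B) ≤ Φ(A) + Σ_{p ∈ B} (Φ(A ∪ {p}) − Φ(A))`. -/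
theorem primerPotential_subadditive {α : Type*} [DecidableEq α] (n L : ℕ)
    (posf posr : α → Fin n → ℕ) (A B : Finset α) :
    (primerPotential n L posf posr (A ∪ B) : ℤ) ≤
      (primerPotential n L posf posr A : ℤ) +
      ∑ p ∈ B, ((primerPotential n L posf posr (insert p A) : ℤ) -
        (primerPotential n L posf posr A : ℤ)) := by
  classical
  induction B using Finset.induction_on with
  | empty => simp
  | @insert b B hb ih =>
    rw [Finset.sum_insert hb]
    have hsub := submod n L posf posr (Finset.subset_union_left (s₁ := A) (s₂ := B)) b
    have hsub' : (primerPotential n L posf posr (insert b (A ∪ B)) : ℤ)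
        + primerPotential n L posf posr A ≤
        primerPotential n L posf posr (insert b A)
        + primerPotential n L posf posr (A ∪ B) := by exact_mod_cast hsub
    have : A ∪ insert b B = insert b (A ∪ B) := by
      ext x; simp [or_comm, or_assoc, or_left_comm]
    rw [this]
    linarith
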